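/- Let P ∈ P(^mE;F) be a continuous m-homogeneous polynomial such that Ψ_1(P̌) : E → L(^{m-1}E;F) is a compact operator, and let φ ∈ E'. Define the (m+1)-homogeneous polynomial Q(x) = φ(x)P(x). Then Ψ_1(Q̌) : E → L(^mE;F) is compact, where Q̌(x_1,...,x_{m+1}) = (1/(m+1)) Σ_{i=1}^{m+1} φ(x_i) P̌(x_1,...,[omit x_i],...,x_{m+1}). Indeed Ψ_1(Q̌)(x) = (1/(m+1)) φ(x)·P̌ + (m/(m+1)) φ ⊗ Ψ_1(P̌)(x) as an element-valued map, which is a sum of compact operators. -/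

import Mathlib

/-- A continuous multilinear map is symmetric. -/
def IsSymMap {𝕜 E F : Type} [RCLike 𝕜] [NormedAddCommGroup E] [NormedSpace 𝕜 E]
    [NormedAddCommGroup F] [NormedSpace 𝕜 F] (m : ℕ)
    (T : ContinuousMultilinearMap 𝕜 (fun _ : Fin m => E) F) : Prop :=
  ∀ (σ : Equiv.Perm (Fin m)) (x : Fin m → E), T (x ∘ σ) = T x

open Finset

/-- Decomposition of a permutation along `succAbove`. -/
lemma perm_succAbove {n : ℕ} (σ : Equiv.Perm (Fin (n + 1))) (t : Fin (n + 1)) :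
    ∃ τ : Equiv.Perm (Fin n), ∀ j, σ (t.succAbove j) = (σ t).succAbove (τ j) := by
  classical
  set e : Option (Fin n) ≃ Option (Fin n) :=
    (finSuccEquiv' t).symm.trans ((σ : Fin (n+1) ≃ Fin (n+1)).trans (finSuccEquiv' (σ t)))
    with he
  refine ⟨Equiv.removeNone e, fun j => ?_⟩
  have h1 : e (some j) = finSuccEquiv' (σ t) (σ (t.succAbove j)) := by
    simp [he, finSuccEquiv'_symm_some]
  obtain ⟨z, hz⟩ := Fin.exists_succAbove_eq (x := σ (t.succAbove j)) (y := σ t)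
    (fun h => Fin.succAbove_ne t j (σ.injective h))
  have h2 : e (some j) = some z := by rw [h1, ← hz, finSuccEquiv'_succAbove]
  have h3 := Equiv.removeNone_some e ⟨z, h2⟩
  rw [h2] at h3
  have h4 : Equiv.removeNone e j = z := by exact Option.some.inj h3
  rw [h4, hz]

lemma signSumAux {n : ℕ} (B : Finset (Fin n)) :
    ∑ A ∈ (univ : Finset (Fin n)).powerset.filter (fun A => B ⊆ A),
        (-1 : ℤ) ^ (n - A.card)
      = if B = univ then 1 else 0 := by
  classical
  have hstep : ∑ A ∈ (univ : Finset (Fin n)).powerset.filter (fun A => B ⊆ A),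
      (-1 : ℤ) ^ (n - A.card) = ∑ C ∈ Bᶜ.powerset, (-1 : ℤ) ^ (n - (B ∪ C).card) := by
    refine Finset.sum_nbij' (fun A => A \ B) (fun C => B ∪ C) ?_ ?_ ?_ ?_ ?_
    · intro A hA
      simp only [mem_filter, mem_powerset] at hA
      simp only [mem_powerset]
      intro x hx
      simp only [mem_sdiff] at hx
      simp [mem_compl, hx.2]
    · intro C hC
      simp only [mem_powerset] at hC
      simp only [mem_filter, mem_powerset]
      exact ⟨subset_univ _, subset_union_left⟩
    · intro A hA
      simp only [mem_filter, mem_powerset] at hA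
      exact Finset.union_sdiff_of_subset hA.2
    · intro C hC
      simp only [mem_powerset] at hC
      refine Finset.union_sdiff_cancel_left ?_
      rw [Finset.disjoint_left]
      intro x hxB hxC
      have := hC hxC
      simp [mem_compl, hxB] at this
    · intro A hA
      simp only [mem_filter, mem_powerset] at hA
      rw [Finset.union_sdiff_of_subset hA.2]
  rw [hstep]
  have hcard : ∀ C ∈ Bᶜ.powerset, (B ∪ C).card = B.card + C.card := by
    intro C hC
    simp only [mem_powerset] at hC
    refine Finset.card_union_of_disjoint ?_
    rw [Finset.disjoint_left]
    intro x hxB hxC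
    have := hC hxC
    simp [mem_compl, hxB] at this
  have hn : n = B.card + Bᶜ.card := by
    have h1 := Finset.card_compl B
    have h2 := Finset.card_le_univ B
    rw [Fintype.card_fin] at h1
    rw [Fintype.card_fin] at h2
    omega
  have hterm : ∀ C ∈ Bᶜ.powerset,
      (-1 : ℤ) ^ (n - (B ∪ C).card) = (-1 : ℤ) ^ Bᶜ.card * (-1 : ℤ) ^ C.card := by
    intro C hC
    have hCle : C.card ≤ Bᶜ.card := Finset.card_le_card (mem_powerset.mp hC)
    have harith : n - (B.card + C.card) = Bᶜ.card - C.card := by omega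
    rw [hcard C hC, harith]
    have : (-1 : ℤ) ^ (Bᶜ.card - C.card) * ((-1 : ℤ) ^ C.card * (-1 : ℤ) ^ C.card)
        = (-1 : ℤ) ^ Bᶜ.card * (-1 : ℤ) ^ C.card := by
      rw [← mul_assoc, ← pow_add, Nat.sub_add_cancel hCle]
    have h2 : (-1 : ℤ) ^ C.card * (-1 : ℤ) ^ C.card = 1 := by
      rw [← pow_add, ← two_mul, pow_mul]
      norm_num
    rw [h2, mul_one] at this
    rw [this]
  rw [Finset.sum_congr rfl hterm, ← Finset.mul_sum, Finset.sum_powerset_neg_one_pow_card]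
  by_cases hB : B = univ
  · have hBc : Bᶜ = ∅ := by simp [hB]
    simp [hB, hBc]
  · have hBc : Bᶜ ≠ ∅ := by
      intro h
      exact hB (by simpa using congrArg compl h)
    simp [hB, hBc]

lemma polarization {𝕜 E F : Type} [RCLike 𝕜] [NormedAddCommGroup E] [NormedSpace 𝕜 E]
    [NormedAddCommGroup F] [NormedSpace 𝕜 F] {n : ℕ}
    (D : ContinuousMultilinearMap 𝕜 (fun _ : Fin n => E) F)
    (hs : IsSymMap n D) (h0 : ∀ x, D (fun _ => x) = 0) (z : Fin n → E) : D z = 0 := by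
  classical
  have key : (0 : F) = ∑ A ∈ (univ : Finset (Fin n)).powerset,
      (-1 : ℤ) ^ (n - A.card) • D (fun _ => ∑ i ∈ A, z i) := by
    simp [h0]
  have expand : ∀ A : Finset (Fin n), D (fun _ => ∑ i ∈ A, z i)
      = ∑ r ∈ Fintype.piFinset (fun _ : Fin n => A), D (fun j => z (r j)) := by
    intro A
    exact D.toMultilinearMap.map_sum_finset (fun _ j => z j) (fun _ => A)
  rw [Finset.sum_congr rfl (fun A _ => by rw [expand A])] at key
  simp only [Finset.smul_sum] at key
  rw [Finset.sum_comm' (s' := fun r => (univ : Finset (Fin n)).powerset.filter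
      (fun A => ∀ j, r j ∈ A)) (t' := Fintype.piFinset (fun _ : Fin n => (univ : Finset (Fin n))))
      (by
        intro A r
        simp only [mem_powerset, mem_filter, Fintype.mem_piFinset, mem_univ, subset_univ,
          true_and, and_true]
        tauto)] at key
  have inner : ∀ r : Fin n → Fin n,
      ∑ A ∈ (univ : Finset (Fin n)).powerset.filter (fun A => ∀ j, r j ∈ A),
        (-1 : ℤ) ^ (n - A.card) • D (fun j => z (r j))
      = (if Finset.image r univ = univ then (1:ℤ) else 0) • D (fun j => z (r j)) := by
    intro r
    rw [← Finset.sum_smul]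
    congr 1
    rw [← signSumAux (Finset.image r univ)]
    refine Finset.sum_congr ?_ (fun _ _ => rfl)
    apply Finset.filter_congr
    intro A _
    simp [Finset.image_subset_iff]
  rw [Finset.sum_congr rfl (fun r _ => inner r)] at key
  have key2 : (0 : F) = ∑ r ∈ (Fintype.piFinset (fun _ : Fin n => (univ : Finset (Fin n)))).filter
      (fun r => Finset.image r univ = univ), D (fun j => z (r j)) := by
    rw [key, Finset.sum_filter]
    refine Finset.sum_congr rfl (fun r _ => ?_)
    by_cases h : Finset.image r univ = univ <;> simp [h]
  have const : ∀ r ∈ (Fintype.piFinset (fun _ : Fin n => (univ : Finset (Fin n)))).filter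
      (fun r => Finset.image r univ = univ), D (fun j => z (r j)) = D z := by
    intro r hr
    simp only [mem_filter] at hr
    have hsurj : Function.Surjective r := by
      intro y
      have : y ∈ Finset.image r univ := by rw [hr.2]; exact mem_univ y
      obtain ⟨x, _, hx⟩ := Finset.mem_image.mp this
      exact ⟨x, hx⟩
    have hbij : Function.Bijective r := Finite.surjective_iff_bijective.mp hsurj
    have := hs (Equiv.ofBijective r hbij) z
    exact this
  rw [Finset.sum_congr rfl const, Finset.sum_const] at key2
  have hcard : ((Fintype.piFinset (fun _ : Fin n => (univ : Finset (Fin n)))).filter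
      (fun r => Finset.image r univ = univ)).card = n.factorial := by
    rw [show n.factorial = Fintype.card (Equiv.Perm (Fin n)) by
      simp [Fintype.card_perm, Fintype.card_fin], ← Finset.card_univ]
    symm
    refine Finset.card_nbij (fun σ => ⇑σ) ?_ ?_ ?_
    · intro σ _
      simp only [Finset.mem_coe, mem_filter, Fintype.mem_piFinset, mem_univ, true_and]
      refine ⟨fun _ => trivial, ?_⟩
      apply Finset.eq_univ_of_forall
      intro y
      exact Finset.mem_image.mpr ⟨σ.symm y, mem_univ _, σ.apply_symm_apply y⟩
    · intro σ1 _ σ2 _ h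
      exact Equiv.coe_fn_injective h
    · intro r hr
      simp only [Finset.coe_filter, Set.mem_setOf_eq] at hr
      have hsurj : Function.Surjective r := by
        intro y
        have : y ∈ Finset.image r univ := by rw [hr.2]; exact mem_univ y
        obtain ⟨x, _, hx⟩ := Finset.mem_image.mp this
        exact ⟨x, hx⟩
      have hbij : Function.Bijective r := Finite.surjective_iff_bijective.mp hsurj
      exact ⟨Equiv.ofBijective r hbij, by simp, rfl⟩
  rw [hcard] at key2
  have : ((n.factorial : 𝕜)) • D z = 0 := by
    rw [Nat.cast_smul_eq_nsmul]
    exact key2.symm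
  rcases smul_eq_zero.mp this with h | h
  · exact absurd h (by exact_mod_cast Nat.factorial_ne_zero n)
  · exact h

section Main

variable {𝕜 E F : Type} [RCLike 𝕜] [NormedAddCommGroup E] [NormedSpace 𝕜 E]
    [NormedAddCommGroup F] [NormedSpace 𝕜 F]

/-- Insert a linear functional at slot `i` of a `k`-linear map to get a `(k+1)`-linear map. -/
noncomputable def insL (k : ℕ) (φ : E →L[𝕜] 𝕜) (i : Fin (k + 1)) :
    ContinuousMultilinearMap 𝕜 (fun _ : Fin k => E) F →L[𝕜]
      ContinuousMultilinearMap 𝕜 (fun _ : Fin (k + 1) => E) F :=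
  (((ContinuousMultilinearMap.domDomCongrₗᵢ 𝕜 E F
      ((Fin.cycleRange i).symm : Fin (k+1) ≃ Fin (k+1))).toLinearIsometry.toContinuousLinearMap).comp
    ((continuousMultilinearCurryLeftEquiv 𝕜 (fun _ : Fin (k + 1) => E)
        F).symm.toLinearIsometry.toContinuousLinearMap)).comp
    (ContinuousLinearMap.smulRightL 𝕜 E (ContinuousMultilinearMap 𝕜 (fun _ : Fin k => E) F) φ)

lemma insL_apply (k : ℕ) (φ : E →L[𝕜] 𝕜) (i : Fin (k + 1))
    (T : ContinuousMultilinearMap 𝕜 (fun _ : Fin k => E) F) (v : Fin (k + 1) → E) :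
    insL k φ i T v = φ (v i) • T (fun j => v (i.succAbove j)) := by
  have h0 : ((Fin.cycleRange i).symm : Fin (k+1) ≃ Fin (k+1)) 0 = i := by
    rw [Equiv.symm_apply_eq]
    exact (Fin.cycleRange_self i).symm
  have hsucc : ∀ j : Fin k,
      ((Fin.cycleRange i).symm : Fin (k+1) ≃ Fin (k+1)) j.succ = i.succAbove j := by
    intro j
    rw [Equiv.symm_apply_eq]
    exact (Fin.cycleRange_succAbove i j).symm
  show ((continuousMultilinearCurryLeftEquiv 𝕜 (fun _ : Fin (k + 1) => E) F).symm
      (φ.smulRight T)).domDomCongr ((Fin.cycleRange i).symm : Fin (k+1) ≃ Fin (k+1)) v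
    = φ (v i) • T (fun j => v (i.succAbove j))
  rw [ContinuousMultilinearMap.domDomCongr_apply,
    continuousMultilinearCurryLeftEquiv_symm_apply, ContinuousLinearMap.smulRight_apply, h0,
    ContinuousMultilinearMap.smul_apply]
  have harg : (Fin.tail fun i_1 => v ((Equiv.symm i.cycleRange) i_1))
      = fun j => v (i.succAbove j) := by
    funext j
    simp [Fin.tail, hsucc j]
  rw [harg]

/-- The symmetrization of `φ ⊗ S`, curried. -/
noncomputable def symML (k : ℕ) (φ : E →L[𝕜] 𝕜)
    (S : ContinuousMultilinearMap 𝕜 (fun _ : Fin (k + 1) => E) F) :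
    E →L[𝕜] ContinuousMultilinearMap 𝕜 (fun _ : Fin (k + 1) => E) F :=
  (((k : 𝕜) + 2)⁻¹ • φ).smulRight S
    + ((k : 𝕜) + 2)⁻¹ • ((∑ i : Fin (k + 1), insL k φ i).comp S.curryLeft)

/-- The symmetrization of `φ ⊗ S`, as a multilinear map. -/
noncomputable def symMLU (k : ℕ) (φ : E →L[𝕜] 𝕜)
    (S : ContinuousMultilinearMap 𝕜 (fun _ : Fin (k + 1) => E) F) :
    ContinuousMultilinearMap 𝕜 (fun _ : Fin (k + 2) => E) F :=
  ContinuousLinearMap.uncurryLeft (n := k + 1) (Ei := fun _ : Fin (k + 2) => E) (symML k φ S)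

lemma symMLU_curryLeft (k : ℕ) (φ : E →L[𝕜] 𝕜)
    (S : ContinuousMultilinearMap 𝕜 (fun _ : Fin (k + 1) => E) F) :
    (symMLU k φ S).curryLeft = symML k φ S :=
  ContinuousLinearMap.curry_uncurryLeft (n := k + 1) (Ei := fun _ : Fin (k + 2) => E)
    (symML k φ S)

lemma symML_uncurry_apply (k : ℕ) (φ : E →L[𝕜] 𝕜)
    (S : ContinuousMultilinearMap 𝕜 (fun _ : Fin (k + 1) => E) F) (z : Fin (k + 2) → E) :
    symMLU k φ S z
      = ((k : 𝕜) + 2)⁻¹ • ∑ t : Fin (k + 2), φ (z t) • S (fun j => z (t.succAbove j)) := by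
  rw [symMLU, ContinuousLinearMap.uncurryLeft_apply]
  show (symML k φ S) (z 0) (Fin.tail z) = _
  simp only [symML, ContinuousLinearMap.add_apply, ContinuousMultilinearMap.add_apply,
    ContinuousLinearMap.smul_apply, ContinuousMultilinearMap.smul_apply,
    ContinuousLinearMap.comp_apply, ContinuousLinearMap.sum_apply,
    ContinuousMultilinearMap.sum_apply, ContinuousLinearMap.smulRight_apply, insL_apply,
    ContinuousMultilinearMap.curryLeft_apply]
  rw [Fin.sum_univ_succ (f := fun t : Fin (k+2) => φ (z t) • S (fun j => z (t.succAbove j))),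
    smul_add]
  congr 1
  · have htl : Fin.tail z = fun j => z (Fin.succAbove 0 j) := by
      funext j
      simp [Fin.tail]
    rw [smul_eq_mul, mul_smul, htl]
  · congr 1
    refine Finset.sum_congr rfl (fun i _ => ?_)
    have harg : (Fin.cons (z 0) fun j => Fin.tail z (i.succAbove j))
        = fun j => z (i.succ.succAbove j) := by
      funext j
      refine Fin.cases ?_ ?_ j
      · simp
      · intro j'
        simp [Fin.succ_succAbove_succ, Fin.tail]
    rw [harg]
    rfl

lemma symML_uncurry_symm (k : ℕ) (φ : E →L[𝕜] 𝕜)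
    (S : ContinuousMultilinearMap 𝕜 (fun _ : Fin (k + 1) => E) F)
    (hsym : IsSymMap (k + 1) S) : IsSymMap (k + 2) (symMLU k φ S) := by
  intro σ z
  rw [symML_uncurry_apply, symML_uncurry_apply]
  congr 1
  have hterm : ∀ t : Fin (k + 2),
      φ ((z ∘ σ) t) • S (fun j => (z ∘ σ) (t.succAbove j))
        = φ (z (σ t)) • S (fun j => z ((σ t).succAbove j)) := by
    intro t
    obtain ⟨τ, hτ⟩ := perm_succAbove σ t
    congr 1
    have : (fun j => (z ∘ σ) (t.succAbove j))
        = (fun j => z ((σ t).succAbove j)) ∘ τ := by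
      funext j
      simp [Function.comp, hτ j]
    rw [this, hsym τ]
  rw [Finset.sum_congr rfl (fun t _ => hterm t)]
  exact Equiv.sum_comp σ (fun t => φ (z t) • S (fun j => z (t.succAbove j)))

lemma symML_uncurry_diag (k : ℕ) (φ : E →L[𝕜] 𝕜)
    (S : ContinuousMultilinearMap 𝕜 (fun _ : Fin (k + 1) => E) F) (x : E) :
    symMLU k φ S (fun _ => x) = φ x • S (fun _ => x) := by
  rw [symML_uncurry_apply]
  have : ∑ t : Fin (k + 2), φ ((fun _ : Fin (k+2) => x) t)
      • S (fun j => (fun _ : Fin (k+2) => x) (t.succAbove j))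
      = (k + 2 : ℕ) • (φ x • S (fun _ => x)) := by
    rw [Finset.sum_const, Finset.card_univ, Fintype.card_fin]
  rw [this, ← Nat.cast_smul_eq_nsmul 𝕜, smul_smul]
  have hne : ((k : 𝕜) + 2) ≠ 0 := by
    have : ((k + 2 : ℕ) : 𝕜) ≠ 0 := Nat.cast_ne_zero.mpr (by omega)
    push_cast at this
    exact this
  rw [show (((k:ℕ) + 2 : ℕ) : 𝕜) = (k : 𝕜) + 2 by push_cast; ring, inv_mul_cancel₀ hne,
    one_smul]

end Main

/-- If `Ψ₁(P̌)` is a compact operator and `φ ∈ E'`, then `Ψ₁(Q̌)` is compact, where `Q̌` is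
the symmetric multilinear map of the polynomial `Q(x) = φ(x) P(x)`. -/
theorem compact_linearization_mul_functional {𝕜 E F : Type} [RCLike 𝕜]
    [NormedAddCommGroup E] [NormedSpace 𝕜 E] [CompleteSpace E]
    [NormedAddCommGroup F] [NormedSpace 𝕜 F] [CompleteSpace F]
    (k : ℕ) (S : ContinuousMultilinearMap 𝕜 (fun _ : Fin (k + 1) => E) F)
    (hsym : IsSymMap (k + 1) S) (hcomp : IsCompactOperator ⇑S.curryLeft)
    (φ : E →L[𝕜] 𝕜)
    (R : ContinuousMultilinearMap 𝕜 (fun _ : Fin (k + 2) => E) F)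
    (hRsym : IsSymMap (k + 2) R)
    (hRdiag : ∀ x, R (fun _ => x) = φ x • S (fun _ => x)) :
    IsCompactOperator ⇑R.curryLeft := by
  have hR : R = symMLU k φ S := by
    have hz : ∀ z, (R - symMLU k φ S) z = 0 := by
      refine polarization _ ?_ ?_
      · intro σ x
        rw [ContinuousMultilinearMap.sub_apply, ContinuousMultilinearMap.sub_apply,
          hRsym σ x, symML_uncurry_symm k φ S hsym σ x]
      · intro x
        rw [ContinuousMultilinearMap.sub_apply, hRdiag x, symML_uncurry_diag, sub_self]
    ext z
    have := hz z
    rw [ContinuousMultilinearMap.sub_apply, sub_eq_zero] at this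
    exact this
  have hcurry : R.curryLeft = symML k φ S := by
    rw [hR, symMLU_curryLeft]
  rw [hcurry]
  have hfun : ⇑(symML k φ S)
      = (fun x : E => ((((k : 𝕜) + 2)⁻¹ • φ) x) • S)
        + ⇑(((k : 𝕜) + 2)⁻¹ • ((∑ i : Fin (k + 1), insL k φ i).comp S.curryLeft)) := by
    funext x
    rw [symML]
    rfl
  rw [hfun]
  refine IsCompactOperator.add ?_ ?_
  · -- rank one operator
    set ψ : E →L[𝕜] 𝕜 := ((k : 𝕜) + 2)⁻¹ • φ with hψ
    refine ⟨(fun c : 𝕜 => c • S) '' Metric.closedBall 0 1, ?_, ?_⟩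
    · exact (isCompact_closedBall 0 1).image (continuous_id.smul continuous_const)
    · have hU : ψ ⁻¹' Metric.closedBall 0 1 ∈ nhds (0 : E) :=
        ψ.continuous.continuousAt.preimage_mem_nhds
          (by rw [map_zero]; exact Metric.closedBall_mem_nhds 0 one_pos)
      refine Filter.mem_of_superset hU ?_
      intro x hx
      exact ⟨ψ x, hx, rfl⟩
  · have h1 : ⇑(((k : 𝕜) + 2)⁻¹ • ((∑ i : Fin (k + 1), insL k φ i).comp S.curryLeft))
        = ((k : 𝕜) + 2)⁻¹
          • ((⇑(∑ i : Fin (k + 1), insL (F := F) k φ i)) ∘ ⇑S.curryLeft) := rfl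
    rw [h1]
    exact (hcomp.continuous_comp (∑ i : Fin (k + 1), insL k φ i).continuous).smul _
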